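/- Let G and H be two nonempty subsets of a metric space (E,σ) such that G is complete and (G,H) has property strongly UC, and let T be an almost cyclic ψ-contraction on G ∪ H. Then T has a unique best approximation in G, i.e. a unique point u₀ ∈ G with σ(u₀,Tu₀) = σ(Tu₀,G). Moreover, for any u ∈ G, the sequence of even iterates {T^{2n}u} converges to u₀. -/

import Mathlib

open Metric Filter Set

/-- Distance between two sets: `σ(G,H) = inf {σ(u,v) : u ∈ G, v ∈ H}`. -/
noncomputable def setDist {E : Type*} [MetricSpace E] (G H : Set E) : ℝ :=
  sInf (Set.image2 dist G H)

/-- The pair `(G,H)` has property UC. -/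
def PropUC {E : Type*} [MetricSpace E] (G H : Set E) : Prop :=
  ∀ u z v : ℕ → E, (∀ n, u n ∈ G) → (∀ n, z n ∈ G) → (∀ n, v n ∈ H) →
    Tendsto (fun n => dist (u n) (v n)) atTop (nhds (setDist G H)) →
    Tendsto (fun n => dist (z n) (v n)) atTop (nhds (setDist G H)) →
    Tendsto (fun n => dist (u n) (z n)) atTop (nhds 0)

/-- The pair `(G,H)` has property strongly UC. -/
def PropSUC {E : Type*} [MetricSpace E] (G H : Set E) : Prop :=
  ∀ u z v : ℕ → E, (∀ n, u n ∈ G) → (∀ n, z n ∈ G) → (∀ n, v n ∈ H) →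
    Tendsto (fun n => dist (u n) (v n) - Metric.infDist (v n) G) atTop (nhds 0) →
    Tendsto (fun n => dist (z n) (v n) - Metric.infDist (v n) G) atTop (nhds 0) →
    Tendsto (fun n => dist (u n) (z n)) atTop (nhds 0)

/-- `ψ : [0,∞) → [0,∞)` is strictly increasing and continuous. -/
structure PsiMap (ψ : ℝ → ℝ) : Prop where
  nonneg : ∀ t, 0 ≤ t → 0 ≤ ψ t
  strictMono : StrictMonoOn ψ (Set.Ici 0)
  continuous : ContinuousOn ψ (Set.Ici 0)

/-- `T` is an almost cyclic `ψ`-contraction on `G ∪ H`: it is cyclic and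
`σ(Tx,Ty) ≤ σ(x,y) − ψ(σ(x,y)) + ψ(σ(y,G))` for all `x ∈ G`, `y ∈ H`. -/
def AlmostCyclicPsiContraction {E : Type*} [MetricSpace E] (G H : Set E) (T : E → E)
    (ψ : ℝ → ℝ) : Prop :=
  Set.MapsTo T G H ∧ Set.MapsTo T H G ∧
    ∀ x ∈ G, ∀ y ∈ H,
      dist (T x) (T y) ≤ dist x y - ψ (dist x y) + ψ (Metric.infDist y G)

set_option linter.unusedVariables false
set_option linter.unusedSectionVars false
set_option linter.unnecessarySimpa false


section AuxLemmas

variable {E : Type*} [MetricSpace E] {G H : Set E} {ψ : ℝ → ℝ} {T : E → E}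

lemma PsiMap.mono (hψ : PsiMap ψ) {s t : ℝ} (h0 : 0 ≤ s) (h : s ≤ t) : ψ s ≤ ψ t :=
  hψ.strictMono.monotoneOn (Set.mem_Ici.mpr h0) (Set.mem_Ici.mpr (h0.trans h)) h

lemma psi_lt_of_le (hψ : PsiMap ψ) {s t : ℝ} (h0 : 0 ≤ s) (h : s < t) : ψ s < ψ t :=
  hψ.strictMono (Set.mem_Ici.mpr h0) (Set.mem_Ici.mpr (h0.trans h.le)) h

/-- `b ≤ infDist x s` from pointwise bounds. -/
lemma le_infDist' {s : Set E} (hs : s.Nonempty) {x : E} {b : ℝ}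
    (h : ∀ y ∈ s, b ≤ dist x y) : b ≤ infDist x s := by
  by_contra hlt
  obtain ⟨y, hy, hxy⟩ := (infDist_lt_iff hs).mp (not_le.mp hlt)
  exact absurd (h y hy) (not_le.mpr hxy)

lemma nonexp (hψ : PsiMap ψ) (hT : AlmostCyclicPsiContraction G H T ψ) {a b : E}
    (ha : a ∈ G) (hb : b ∈ H) : dist (T a) (T b) ≤ dist a b := by
  have h1 := hT.2.2 a ha b hb
  have h2 : infDist b G ≤ dist a b := by
    rw [dist_comm]; exact infDist_le_dist_of_mem ha
  have h3 : ψ (infDist b G) ≤ ψ (dist a b) := hψ.mono infDist_nonneg h2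
  linarith

lemma memG (hT : AlmostCyclicPsiContraction G H T ψ) {a : E} (ha : a ∈ G) :
    ∀ k, T^[2 * k] a ∈ G := by
  intro k; induction k with
  | zero => simpa using ha
  | succ k ih =>
    rw [show 2 * (k + 1) = 2 * k + 1 + 1 by ring, Function.iterate_succ_apply',
      Function.iterate_succ_apply']
    exact hT.2.1 (hT.1 ih)

lemma memH (hT : AlmostCyclicPsiContraction G H T ψ) {b : E} (hb : b ∈ H) :
    ∀ k, T^[2 * k] b ∈ H := by
  intro k; induction k with
  | zero => simpa using hb
  | succ k ih =>
    rw [show 2 * (k + 1) = 2 * k + 1 + 1 by ring, Function.iterate_succ_apply',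
      Function.iterate_succ_apply']
    exact hT.1 (hT.2.1 ih)

lemma it2 (T : E → E) (x : E) (k : ℕ) : T^[2 * (k + 1)] x = T (T (T^[2 * k] x)) := by
  rw [show 2 * (k + 1) = 2 * k + 1 + 1 by ring, Function.iterate_succ_apply',
    Function.iterate_succ_apply']

lemma itc (T : E → E) (x : E) (n : ℕ) : T (T^[n] x) = T^[n] (T x) := by
  rw [← Function.iterate_succ_apply, Function.iterate_succ_apply']

lemma it2' (T : E → E) (x : E) (k : ℕ) : T^[2 * (k + 1)] x = T^[2 * k] (T (T x)) := by
  rw [it2, itc T x (2 * k), itc T (T x) (2 * k)]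

lemma itadd (T : E → E) (x : E) (k m : ℕ) : T^[2 * k] (T^[2 * m] x) = T^[2 * (k + m)] x := by
  rw [show 2 * (k + m) = 2 * k + 2 * m by ring, Function.iterate_add_apply]

lemma Bgle (hT : AlmostCyclicPsiContraction G H T ψ) {a b : E} (ha : a ∈ G) (k : ℕ) :
    infDist (T^[2 * k] b) G ≤ dist (T^[2 * k] a) (T^[2 * k] b) := by
  rw [dist_comm]; exact infDist_le_dist_of_mem (memG hT ha k)

lemma Brec (hψ : PsiMap ψ) (hT : AlmostCyclicPsiContraction G H T ψ) {a b : E}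
    (ha : a ∈ G) (hb : b ∈ H) (k : ℕ) :
    dist (T^[2 * (k + 1)] a) (T^[2 * (k + 1)] b) ≤
      dist (T^[2 * k] a) (T^[2 * k] b) - ψ (dist (T^[2 * k] a) (T^[2 * k] b))
        + ψ (infDist (T^[2 * k] b) G) := by
  have hxG := memG hT ha k
  have hyH := memH hT hb k
  have h1 := hT.2.2 _ hxG _ hyH
  have h2 := nonexp hψ hT (hT.2.1 hyH) (hT.1 hxG)
  rw [it2, it2]
  calc dist (T (T (T^[2 * k] a))) (T (T (T^[2 * k] b)))
      = dist (T (T (T^[2 * k] b))) (T (T (T^[2 * k] a))) := dist_comm _ _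
    _ ≤ dist (T (T^[2 * k] b)) (T (T^[2 * k] a)) := h2
    _ = dist (T (T^[2 * k] a)) (T (T^[2 * k] b)) := dist_comm _ _
    _ ≤ _ := h1

lemma Banti (hψ : PsiMap ψ) (hT : AlmostCyclicPsiContraction G H T ψ) {a b : E}
    (ha : a ∈ G) (hb : b ∈ H) :
    Antitone (fun k => dist (T^[2 * k] a) (T^[2 * k] b)) := by
  apply antitone_nat_of_succ_le
  intro k
  have h1 := Brec hψ hT ha hb k
  have h2 : ψ (infDist (T^[2 * k] b) G) ≤ ψ (dist (T^[2 * k] a) (T^[2 * k] b)) :=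
    hψ.mono infDist_nonneg (Bgle hT ha k)
  show dist (T^[2 * (k + 1)] a) (T^[2 * (k + 1)] b) ≤ dist (T^[2 * k] a) (T^[2 * k] b)
  linarith

end AuxLemmas

section SeqLemmas

variable {ψ : ℝ → ℝ}

lemma seq_anti (hψ : PsiMap ψ) (β γ : ℕ → ℝ) (h0 : ∀ k, 0 ≤ γ k)
    (hgb : ∀ k, γ k ≤ β k)
    (rec : ∀ k, β (k + 1) ≤ β k - ψ (β k) + ψ (γ k)) (k : ℕ) : β (k + 1) ≤ β k := by
  have := hψ.mono (h0 k) (hgb k)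
  linarith [rec k]

lemma descent (hψ : PsiMap ψ) (β γ : ℕ → ℝ) (h0 : ∀ k, 0 ≤ γ k)
    (hgb : ∀ k, γ k ≤ β k)
    (rec : ∀ k, β (k + 1) ≤ β k - ψ (β k) + ψ (γ k))
    {D μ ε V : ℝ} (hD : 0 ≤ D) (hμ : 0 ≤ μ) (hμε : μ < ε)
    (hγ : ∀ k, γ k ≤ D + μ) (hV : β 0 ≤ V) :
    ∀ k, β k ≤ max (D + ε) (V - k * (ψ (D + ε) - ψ (D + μ))) := by
  set η := ψ (D + ε) - ψ (D + μ) with hη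
  intro k
  induction k with
  | zero => simpa using Or.inr hV
  | succ k ih =>
    by_cases hcase : β k ≤ D + ε
    · exact le_max_of_le_left ((seq_anti hψ β γ h0 hgb rec k).trans hcase)
    · push_neg at hcase
      have hβk : β k ≤ V - k * η := by
        rcases le_max_iff.mp ih with h | h
        · linarith
        · exact h
      have hψ1 : ψ (D + ε) ≤ ψ (β k) := hψ.mono (by linarith) hcase.le
      have hψ2 : ψ (γ k) ≤ ψ (D + μ) := hψ.mono (h0 k) (hγ k)
      have : β (k + 1) ≤ β k - η := by have := rec k; rw [hη]; linarith
      refine le_max_of_le_right ?_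
      push_cast
      linarith

lemma descent' (hψ : PsiMap ψ) (β γ : ℕ → ℝ) (h0 : ∀ k, 0 ≤ γ k)
    (hgb : ∀ k, γ k ≤ β k)
    (rec : ∀ k, β (k + 1) ≤ β k - ψ (β k) + ψ (γ k))
    {D μ ε V : ℝ} (hD : 0 ≤ D) (hμ : 0 ≤ μ) (hμε : μ < ε)
    (hγ : ∀ k, γ k ≤ D + μ) (hV : β 0 ≤ V) {k : ℕ}
    (hk : V - (D + ε) ≤ k * (ψ (D + ε) - ψ (D + μ))) : β k ≤ D + ε := by
  have h := descent hψ β γ h0 hgb rec hD hμ hμε hγ hV k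
  rcases le_max_iff.mp h with h | h
  · exact h
  · linarith

lemma limlem (hψ : PsiMap ψ) (β γ : ℕ → ℝ) (h0 : ∀ k, 0 ≤ γ k)
    (hgb : ∀ k, γ k ≤ β k)
    (rec : ∀ k, β (k + 1) ≤ β k - ψ (β k) + ψ (γ k))
    {D : ℝ} (hγD : Tendsto γ atTop (nhds D)) :
    Tendsto β atTop (nhds D) := by
  have hD : 0 ≤ D := ge_of_tendsto' hγD h0
  have hanti : Antitone β := antitone_nat_of_succ_le (seq_anti hψ β γ h0 hgb rec)
  have hbdd : BddBelow (Set.range β) := by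
    refine ⟨0, ?_⟩
    rintro x ⟨k, rfl⟩
    exact (h0 k).trans (hgb k)
  have hlim : Tendsto β atTop (nhds (⨅ k, β k)) := tendsto_atTop_ciInf hanti hbdd
  have hDle : D ≤ ⨅ k, β k := le_of_tendsto_of_tendsto' hγD hlim hgb
  have hge : ⨅ k, β k ≤ D := by
    by_contra hlt
    push_neg at hlt
    set ℓ := ⨅ k, β k with hℓ
    set ε := (ℓ - D) / 2 with hε
    set μ := (ℓ - D) / 4 with hμdef
    have hεpos : 0 < ε := by rw [hε]; linarith
    have hμpos : 0 < μ := by rw [hμdef]; linarith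
    have hμε : μ < ε := by rw [hμdef, hε]; linarith
    obtain ⟨N, hN⟩ := (Metric.tendsto_atTop.mp hγD μ hμpos)
    have hγ' : ∀ k, γ (N + k) ≤ D + μ := by
      intro k
      have := hN (N + k) (Nat.le_add_right _ _)
      rw [Real.dist_eq, abs_lt] at this
      linarith [this.2]
    set η := ψ (D + ε) - ψ (D + μ) with hηdef
    have hηpos : 0 < η := by
      rw [hηdef]
      exact sub_pos.mpr (psi_lt_of_le hψ (by linarith) (by linarith))
    obtain ⟨k, hk⟩ := exists_nat_ge ((β N - (D + ε)) / η)
    have hk' : β N - (D + ε) ≤ k * η := by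
      rw [div_le_iff₀ hηpos] at hk
      linarith
    have hfin : β (N + k) ≤ D + ε := by
      refine descent' hψ (fun j => β (N + j)) (fun j => γ (N + j)) (fun j => h0 _)
        (fun j => hgb _) (fun j => rec (N + j))
        hD hμpos.le hμε hγ' le_rfl (k := k) ?_
      simpa [hηdef] using hk'
    have : ℓ ≤ β (N + k) := ciInf_le hbdd _
    rw [hε] at hfin
    linarith
  have : D = ⨅ k, β k := le_antisymm hDle hge
  rw [this]
  exact hlim

end SeqLemmas

/-- The limit of consecutive distances along the orbit of `u`. -/
noncomputable def dlim {E : Type*} [MetricSpace E] (T : E → E) (u : E) : ℝ :=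
  ⨅ k, dist (T^[2 * k] u) (T^[2 * k] (T u))

section Orbit

variable {E : Type*} [MetricSpace E] {G H : Set E} {ψ : ℝ → ℝ} {T : E → E}

lemma O0 (u : E) : 0 ≤ dlim T u := le_ciInf fun _ => dist_nonneg

lemma O1 (hψ : PsiMap ψ) (hT : AlmostCyclicPsiContraction G H T ψ) {u : E} (hu : u ∈ G) :
    Tendsto (fun k => dist (T^[2 * k] u) (T^[2 * k] (T u))) atTop (nhds (dlim T u)) :=
  tendsto_atTop_ciInf (Banti hψ hT hu (hT.1 hu))
    ⟨0, by rintro x ⟨k, rfl⟩; exact dist_nonneg⟩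

lemma q_le_p (hψ : PsiMap ψ) (hT : AlmostCyclicPsiContraction G H T ψ) {u : E} (hu : u ∈ G)
    (k : ℕ) : dist (T^[2 * k] (T (T u))) (T^[2 * k] (T u)) ≤
      dist (T^[2 * k] u) (T^[2 * k] (T u)) := by
  have h := nonexp hψ hT (memG hT hu k) (memH hT (hT.1 hu) k)
  rw [itc T u (2 * k), itc T (T u) (2 * k)] at h
  rw [dist_comm]
  exact h

lemma p_succ_le_q (hψ : PsiMap ψ) (hT : AlmostCyclicPsiContraction G H T ψ) {u : E} (hu : u ∈ G)
    (k : ℕ) : dist (T^[2 * (k + 1)] u) (T^[2 * (k + 1)] (T u)) ≤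
      dist (T^[2 * k] (T (T u))) (T^[2 * k] (T u)) := by
  have h := nonexp hψ hT (memG hT (hT.2.1 (hT.1 hu)) k) (memH hT (hT.1 hu) k)
  -- h : dist (T (T^[2k] (T (T u)))) (T (T^[2k] (T u))) ≤ dist (T^[2k] (T (T u))) (T^[2k] (T u))
  rw [itc T (T (T u)) (2 * k), itc T (T u) (2 * k)] at h
  rw [it2', it2']
  rw [dist_comm]
  exact h

lemma O2 (hψ : PsiMap ψ) (hT : AlmostCyclicPsiContraction G H T ψ) {u : E} (hu : u ∈ G) :
    Tendsto (fun k => dist (T^[2 * k] (T (T u))) (T^[2 * k] (T u))) atTop (nhds (dlim T u)) := by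
  have hlo : Tendsto (fun k => dist (T^[2 * (k + 1)] u) (T^[2 * (k + 1)] (T u))) atTop
      (nhds (dlim T u)) := by
    have := (O1 hψ hT hu).comp (tendsto_add_atTop_nat 1)
    simpa [Function.comp_def] using this
  exact tendsto_of_tendsto_of_tendsto_of_le_of_le hlo (O1 hψ hT hu)
    (fun k => p_succ_le_q hψ hT hu k) (fun k => q_le_p hψ hT hu k)

lemma O3 (hψ : PsiMap ψ) (hT : AlmostCyclicPsiContraction G H T ψ) {u : E} (hu : u ∈ G) :
    Tendsto (fun k => infDist (T^[2 * k] (T u)) G) atTop (nhds (dlim T u)) := by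
  set d := dlim T u with hd
  have hd0 : 0 ≤ d := O0 u
  set p := fun k => dist (T^[2 * k] u) (T^[2 * k] (T u)) with hp
  set c := fun k => infDist (T^[2 * k] (T u)) G with hc
  have hp_to : Tendsto p atTop (nhds d) := O1 hψ hT hu
  have hψp : Tendsto (fun k => ψ (p k)) atTop (nhds (ψ d)) := by
    have h1 : Tendsto p atTop (nhdsWithin d (Set.Ici 0)) :=
      tendsto_nhdsWithin_of_tendsto_nhds_of_eventually_within p hp_to
        (Eventually.of_forall fun k => dist_nonneg)
    exact ((hψ.continuous d (Set.mem_Ici.mpr hd0)).tendsto).comp h1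
  have hw : Tendsto (fun k => p (k + 1) - p k + ψ (p k)) atTop (nhds (ψ d)) := by
    have := ((hp_to.comp (tendsto_add_atTop_nat 1)).sub hp_to).add hψp
    simpa using this
  have hlow : ∀ k, p (k + 1) - p k + ψ (p k) ≤ ψ (c k) := by
    intro k
    have := Brec hψ hT hu (hT.1 hu) k
    change p (k + 1) ≤ p k - ψ (p k) + ψ (c k) at this
    linarith
  have hcq : ∀ k, c k ≤ dist (T^[2 * k] (T (T u))) (T^[2 * k] (T u)) := by
    intro k
    rw [dist_comm]
    exact infDist_le_dist_of_mem (memG hT (hT.2.1 (hT.1 hu)) k)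
  have hq_to := O2 hψ hT hu
  rw [Metric.tendsto_atTop]
  intro ε hε
  -- upper bound eventually
  obtain ⟨N1, hN1⟩ := Metric.tendsto_atTop.mp hq_to ε hε
  -- lower bound eventually
  have hlower : ∃ N2, ∀ k ≥ N2, d - ε < c k := by
    by_cases hcase : d < ε
    · exact ⟨0, fun k _ => lt_of_lt_of_le (by linarith) infDist_nonneg⟩
    · push_neg at hcase
      have hde : 0 ≤ d - ε := by linarith
      have hδ : 0 < ψ d - ψ (d - ε) := sub_pos.mpr (psi_lt_of_le hψ hde (by linarith))
      obtain ⟨N2, hN2⟩ := Metric.tendsto_atTop.mp hw _ hδ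
      refine ⟨N2, fun k hk => ?_⟩
      have h1 := hN2 k hk
      rw [Real.dist_eq, abs_lt] at h1
      have h2 : ψ (d - ε) < ψ (c k) := by
        have := hlow k
        linarith [h1.1]
      by_contra hcon
      push_neg at hcon
      exact absurd (hψ.mono infDist_nonneg hcon) (not_le.mpr h2)
  obtain ⟨N2, hN2⟩ := hlower
  refine ⟨max N1 N2, fun k hk => ?_⟩
  have h1 := hN1 k (le_trans (le_max_left _ _) hk)
  have h2 := hN2 k (le_trans (le_max_right _ _) hk)
  rw [Real.dist_eq, abs_lt] at h1 ⊢
  constructor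
  · linarith
  · have := (hcq k)
    linarith [h1.2]

lemma O4 (hG : G.Nonempty) (hSUC : PropSUC G H) (hψ : PsiMap ψ)
    (hT : AlmostCyclicPsiContraction G H T ψ) {u : E} (hu : u ∈ G) :
    Tendsto (fun n => dist (T^[2 * n] u) (T^[2 * (n + 1)] u)) atTop (nhds 0) := by
  have hmem1 : ∀ n, T^[2 * n] u ∈ G := memG hT hu
  have hmem2 : ∀ n, T^[2 * (n + 1)] u ∈ G := fun n => memG hT hu (n + 1)
  have hmem3 : ∀ n, T^[2 * n] (T u) ∈ H := memH hT (hT.1 hu)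
  have heq : ∀ n, T^[2 * (n + 1)] u = T^[2 * n] (T (T u)) := by
    intro n
    rw [it2, itc T u (2 * n), itc T (T u) (2 * n)]
  refine hSUC _ _ _ hmem1 hmem2 hmem3 ?_ ?_
  · simpa using (O1 hψ hT hu).sub (O3 hψ hT hu)
  · have h := (O2 hψ hT hu).sub (O3 hψ hT hu)
    simp only [sub_self] at h
    simp only [heq]
    exact h
end Orbit

section Cauchy

variable {E : Type*} [MetricSpace E] {G H : Set E} {ψ : ℝ → ℝ} {T : E → E}

lemma travel {y : ℕ → E} {N : ℕ} {δ : ℝ} (hδ : ∀ t, N ≤ t → dist (y t) (y (t + 1)) ≤ δ)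
    {n : ℕ} (hn : N ≤ n) : ∀ s : ℕ, dist (y n) (y (n + s)) ≤ s * δ := by
  intro s
  induction s with
  | zero => simp
  | succ s ih =>
    have h1 : dist (y n) (y (n + s + 1)) ≤
        dist (y n) (y (n + s)) + dist (y (n + s)) (y (n + s + 1)) := dist_triangle _ _ _
    have h2 := hδ (n + s) (hn.trans (Nat.le_add_right _ _))
    have h3 : n + (s + 1) = n + s + 1 := by omega
    rw [h3]
    push_cast
    linarith

lemma O5 (hG : G.Nonempty) (hSUC : PropSUC G H) (hψ : PsiMap ψ)
    (hT : AlmostCyclicPsiContraction G H T ψ) {u : E} (hu : u ∈ G) :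
    CauchySeq (fun n => T^[2 * n] u) := by
  classical
  have hd0 : 0 ≤ dlim T u := O0 u
  have hp0 : ∀ m, dist (T^[2 * m] u) (T^[2 * m] (T u)) ≤ dist u (T u) := by
    intro m
    have := (Banti hψ hT hu (hT.1 hu)) (Nat.zero_le m)
    simpa using this
  rw [Metric.cauchySeq_iff]
  by_contra hcon
  push_neg at hcon
  obtain ⟨ε₀, hε₀, hvio⟩ := hcon
  have key : ∀ i : ℕ, ∃ A B : ℕ,
      ε₀ / 2 ≤ dist (T^[2 * A] u) (T^[2 * B] u) ∧
      dist (T^[2 * A] u) (T^[2 * B] (T u)) - infDist (T^[2 * B] (T u)) G ≤ 2 * ((i : ℝ) + 1)⁻¹ ∧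
      dist (T^[2 * B] u) (T^[2 * B] (T u)) - infDist (T^[2 * B] (T u)) G ≤ ((i : ℝ) + 1)⁻¹ := by
    intro i
    set εi : ℝ := ((i : ℝ) + 1)⁻¹ with hεi
    have hεipos : 0 < εi := by positivity
    have hμpos : 0 < εi / 2 := by positivity
    have hμε : εi / 2 < εi := by linarith
    have hηpos : 0 < ψ (dlim T u + εi) - ψ (dlim T u + εi / 2) :=
      sub_pos.mpr (psi_lt_of_le hψ (by linarith) (by linarith))
    obtain ⟨s, hs⟩ := exists_nat_ge
      ((ε₀ + 1 + dist u (T u) - (dlim T u + εi)) / (ψ (dlim T u + εi) - ψ (dlim T u + εi / 2)))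
    have hsη : ε₀ + 1 + dist u (T u) - (dlim T u + εi) ≤
        s * (ψ (dlim T u + εi) - ψ (dlim T u + εi / 2)) := by
      rw [div_le_iff₀ hηpos] at hs; linarith
    have hδminpos : 0 < min 1 (ε₀ / (4 * s + 4)) := by
      apply lt_min one_pos; positivity
    obtain ⟨N1, hN1⟩ := Metric.tendsto_atTop.mp (O4 hG hSUC hψ hT hu) _ hδminpos
    obtain ⟨N2, hN2⟩ := Metric.tendsto_atTop.mp (O3 hψ hT hu) _ hμpos
    have hpc : Tendsto (fun k => dist (T^[2 * k] u) (T^[2 * k] (T u)) -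
        infDist (T^[2 * k] (T u)) G) atTop (nhds 0) := by
      simpa using (O1 hψ hT hu).sub (O3 hψ hT hu)
    obtain ⟨N3, hN3⟩ := Metric.tendsto_atTop.mp hpc _ hεipos
    -- step bound in convenient form
    have hstep : ∀ t, max (max N1 N2) N3 ≤ t →
        dist (T^[2 * t] u) (T^[2 * (t + 1)] u) ≤ min 1 (ε₀ / (4 * s + 4)) := by
      intro t ht
      have h := hN1 t (le_trans (le_max_left _ _) (le_trans (le_max_left _ _) ht))
      rw [Real.dist_eq, abs_lt] at h
      linarith [h.2]
    have hctail : ∀ t, max (max N1 N2) N3 ≤ t →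
        |infDist (T^[2 * t] (T u)) G - dlim T u| < εi / 2 := by
      intro t ht
      have h := hN2 t (le_trans (le_max_right _ _) (le_trans (le_max_left _ _) ht))
      rwa [Real.dist_eq] at h
    have hpctail : ∀ t, max (max N1 N2) N3 ≤ t →
        dist (T^[2 * t] u) (T^[2 * t] (T u)) - infDist (T^[2 * t] (T u)) G < εi := by
      intro t ht
      have h := hN3 t (le_trans (le_max_right _ _) ht)
      rw [Real.dist_eq, abs_lt] at h
      linarith [h.2]
    set N := max (max N1 N2) N3 with hNdef
    -- get a violating pair beyond N
    obtain ⟨a₀, ha₀, b₀, hb₀, hab⟩ := hvio N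
    have hne : a₀ ≠ b₀ := by
      intro hEq
      rw [hEq] at hab
      simp at hab
      linarith
    -- normalize: n₁ < M, both ≥ N, ε₀ ≤ dist
    obtain ⟨n₁, M, hn₁N, hMN, hn₁M, hdistn₁M⟩ :
        ∃ n₁ M : ℕ, N ≤ n₁ ∧ N ≤ M ∧ n₁ < M ∧ ε₀ ≤ dist (T^[2 * n₁] u) (T^[2 * M] u) := by
      rcases Nat.lt_or_ge a₀ b₀ with h | h
      · exact ⟨a₀, b₀, ha₀, hb₀, h, hab⟩
      · have h' : b₀ < a₀ := lt_of_le_of_ne h (Ne.symm hne)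
        exact ⟨b₀, a₀, hb₀, ha₀, h', by rwa [dist_comm]⟩
    -- minimal violator
    have hPex : ∃ j, n₁ < j ∧ ε₀ ≤ dist (T^[2 * n₁] u) (T^[2 * j] u) := ⟨M, hn₁M, hdistn₁M⟩
    set m := Nat.find hPex with hmdef
    obtain ⟨hn₁m, hdistm⟩ := Nat.find_spec hPex
    have hmN : N ≤ m := le_trans hn₁N hn₁m.le
    -- base bound
    have hbase : dist (T^[2 * n₁] u) (T^[2 * m] u) ≤ ε₀ + 1 := by
      obtain ⟨m', hm'⟩ : ∃ m', m = m' + 1 := ⟨m - 1, by omega⟩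
      rcases Nat.lt_or_ge n₁ m' with hcase | hcase
      · have hmin := Nat.find_min hPex (show m' < m by omega)
        push_neg at hmin
        have h1 : dist (T^[2 * n₁] u) (T^[2 * m'] u) < ε₀ := hmin hcase
        have h2 : dist (T^[2 * m'] u) (T^[2 * (m' + 1)] u) ≤ min 1 (ε₀ / (4 * s + 4)) :=
          hstep m' (by omega)
        have h3 := dist_triangle (T^[2 * n₁] u) (T^[2 * m'] u) (T^[2 * m] u)
        rw [hm']
        have hm1 : min 1 (ε₀ / (4 * s + 4)) ≤ 1 := min_le_left _ _
        rw [hm'] at h3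
        linarith
      · have hn₁m' : n₁ = m' := by omega
        have h2 : dist (T^[2 * n₁] u) (T^[2 * (n₁ + 1)] u) ≤ min 1 (ε₀ / (4 * s + 4)) :=
          hstep n₁ hn₁N
        have hm1 : min 1 (ε₀ / (4 * s + 4)) ≤ 1 := min_le_left _ _
        rw [hm', ← hn₁m']
        linarith
    -- descent on pair (T^[2n₁]u , T^[2m](Tu))
    have haG : T^[2 * n₁] u ∈ G := memG hT hu n₁
    have hbH : T^[2 * m] (T u) ∈ H := memH hT (hT.1 hu) m
    have hitb : ∀ j : ℕ, T^[2 * j] (T^[2 * m] (T u)) = T^[2 * (j + m)] (T u) :=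
      fun j => itadd T (T u) j m
    have hγ : ∀ j : ℕ, infDist (T^[2 * j] (T^[2 * m] (T u))) G ≤ dlim T u + εi / 2 := by
      intro j
      rw [hitb j]
      have := hctail (j + m) (le_trans hmN (Nat.le_add_left _ _))
      rw [abs_lt] at this
      linarith [this.2]
    have hV : dist (T^[2 * 0] (T^[2 * n₁] u)) (T^[2 * 0] (T^[2 * m] (T u))) ≤
        ε₀ + 1 + dist u (T u) := by
      simp only [Nat.mul_zero, Function.iterate_zero_apply]
      have h3 := dist_triangle (T^[2 * n₁] u) (T^[2 * m] u) (T^[2 * m] (T u))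
      have := hp0 m
      linarith
    have hdesc : dist (T^[2 * s] (T^[2 * n₁] u)) (T^[2 * s] (T^[2 * m] (T u))) ≤
        dlim T u + εi := by
      refine descent' hψ
        (fun j => dist (T^[2 * j] (T^[2 * n₁] u)) (T^[2 * j] (T^[2 * m] (T u))))
        (fun j => infDist (T^[2 * j] (T^[2 * m] (T u))) G)
        (fun j => infDist_nonneg) (fun j => Bgle hT haG j)
        (fun j => Brec hψ hT haG hbH j) hd0 hμpos.le hμε hγ hV ?_
      exact hsη
    -- final indices
    refine ⟨n₁ + s, m + s, ?_, ?_, ?_⟩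
    · -- separation
      have t1 : dist (T^[2 * n₁] u) (T^[2 * (n₁ + s)] u) ≤
          s * min 1 (ε₀ / (4 * s + 4)) := travel hstep hn₁N s
      have t2 : dist (T^[2 * m] u) (T^[2 * (m + s)] u) ≤
          s * min 1 (ε₀ / (4 * s + 4)) := travel hstep hmN s
      have h3 := dist_triangle (T^[2 * n₁] u) (T^[2 * (n₁ + s)] u) (T^[2 * m] u)
      have h4 := dist_triangle (T^[2 * (n₁ + s)] u) (T^[2 * (m + s)] u) (T^[2 * m] u)
      have h5 : dist (T^[2 * (m + s)] u) (T^[2 * m] u) = dist (T^[2 * m] u) (T^[2 * (m + s)] u) :=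
        dist_comm _ _
      have hsmall : s * min 1 (ε₀ / (4 * s + 4)) ≤ ε₀ / 4 := by
        have h6 : (s : ℝ) * min 1 (ε₀ / (4 * s + 4)) ≤ s * (ε₀ / (4 * s + 4)) := by
          apply mul_le_mul_of_nonneg_left (min_le_right _ _) (Nat.cast_nonneg s)
        have h7 : (s : ℝ) * (ε₀ / (4 * s + 4)) ≤ ε₀ / 4 := by
          have hpos : (0:ℝ) < 4 * s + 4 := by positivity
          have hss : (0:ℝ) ≤ s := Nat.cast_nonneg s
          rw [← mul_div_assoc, div_le_div_iff₀ hpos (by norm_num : (0:ℝ) < 4)]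
          nlinarith
        linarith
      linarith
    · -- diff1
      have heqA : T^[2 * s] (T^[2 * n₁] u) = T^[2 * (n₁ + s)] u := by
        rw [itadd T u s n₁, Nat.add_comm s n₁]
      have heqB : T^[2 * s] (T^[2 * m] (T u)) = T^[2 * (m + s)] (T u) := by
        rw [hitb s, Nat.add_comm s m]
      rw [heqA, heqB] at hdesc
      have hclow := hctail (m + s) (le_trans hmN (Nat.le_add_right _ _))
      rw [abs_lt] at hclow
      have := hclow.1
      linarith
    · -- diff2
      have := hpctail (m + s) (le_trans hmN (Nat.le_add_right _ _))
      linarith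
  choose A B h1 h2 h3 using key
  have hbound2 : Tendsto (fun i : ℕ => 2 * ((i : ℝ) + 1)⁻¹) atTop (nhds 0) := by
    have := tendsto_one_div_add_atTop_nhds_zero_nat.const_mul (2:ℝ)
    simpa [one_div] using this
  have hbound1 : Tendsto (fun i : ℕ => ((i : ℝ) + 1)⁻¹) atTop (nhds 0) := by
    simpa [one_div] using tendsto_one_div_add_atTop_nhds_zero_nat (𝕜 := ℝ)
  have htz := hSUC (fun i => T^[2 * A i] u) (fun i => T^[2 * B i] u)
    (fun i => T^[2 * B i] (T u))
    (fun i => memG hT hu (A i)) (fun i => memG hT hu (B i))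
    (fun i => memH hT (hT.1 hu) (B i))
    (squeeze_zero (fun i => by
        have : infDist (T^[2 * B i] (T u)) G ≤ dist (T^[2 * A i] u) (T^[2 * B i] (T u)) := by
          rw [dist_comm]; exact infDist_le_dist_of_mem (memG hT hu (A i))
        linarith)
      (fun i => h2 i) hbound2)
    (squeeze_zero (fun i => by
        have : infDist (T^[2 * B i] (T u)) G ≤ dist (T^[2 * B i] u) (T^[2 * B i] (T u)) := by
          rw [dist_comm]; exact infDist_le_dist_of_mem (memG hT hu (B i))
        linarith)
      (fun i => h3 i) hbound1)
  obtain ⟨I, hI⟩ := Metric.tendsto_atTop.mp htz (ε₀ / 2) (by linarith)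
  have hIc := hI I le_rfl
  rw [Real.dist_eq, abs_lt] at hIc
  have := h1 I
  linarith [hIc.2]

end Cauchy

section Final

variable {E : Type*} [MetricSpace E] {G H : Set E} {ψ : ℝ → ℝ} {T : E → E}

lemma O6 (hG : G.Nonempty) (hGcomp : IsComplete G) (hSUC : PropSUC G H) (hψ : PsiMap ψ)
    (hT : AlmostCyclicPsiContraction G H T ψ) {u : E} (hu : u ∈ G) :
    ∃ w ∈ G, Tendsto (fun n => T^[2 * n] u) atTop (nhds w) :=
  cauchySeq_tendsto_of_isComplete hGcomp (fun n => memG hT hu n) (O5 hG hSUC hψ hT hu)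

lemma O7 (hψ : PsiMap ψ) (hT : AlmostCyclicPsiContraction G H T ψ) {u w : E} (hu : u ∈ G)
    (hw : Tendsto (fun n => T^[2 * n] u) atTop (nhds w)) :
    Tendsto (fun n => dist w (T^[2 * n] (T u))) atTop (nhds (dlim T u)) := by
  have h0 : Tendsto (fun n => dist (T^[2 * n] u) w) atTop (nhds 0) :=
    tendsto_iff_dist_tendsto_zero.mp hw
  have hdiff : Tendsto (fun n => dist w (T^[2 * n] (T u)) -
      dist (T^[2 * n] u) (T^[2 * n] (T u))) atTop (nhds 0) := by
    apply squeeze_zero_norm (a := fun n => dist (T^[2 * n] u) w) _ h0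
    intro n
    have := abs_dist_sub_le w (T^[2 * n] u) (T^[2 * n] (T u))
    rw [dist_comm w (T^[2 * n] u)] at this
    simpa using this
  have := hdiff.add (O1 hψ hT hu)
  simpa using this

lemma O8 (hG : G.Nonempty) (hGcomp : IsComplete G) (hSUC : PropSUC G H) (hψ : PsiMap ψ)
    (hT : AlmostCyclicPsiContraction G H T ψ) {u w : E} (hu : u ∈ G) (hwG : w ∈ G)
    (hw : Tendsto (fun n => T^[2 * n] u) atTop (nhds w)) :
    Tendsto (fun k => T^[2 * k] w) atTop (nhds w) := by
  have key : ∀ i : ℕ, ∃ a k : ℕ, i ≤ a ∧ i ≤ k ∧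
      dist (T^[2 * k] w) (T^[2 * a] (T u)) - infDist (T^[2 * a] (T u)) G ≤ 2 * ((i : ℝ) + 1)⁻¹ ∧
      dist (T^[2 * a] u) (T^[2 * a] (T u)) - infDist (T^[2 * a] (T u)) G ≤ ((i : ℝ) + 1)⁻¹ := by
    intro i
    set εi : ℝ := ((i : ℝ) + 1)⁻¹ with hεi
    have hεipos : 0 < εi := by positivity
    obtain ⟨N1, hN1⟩ := Metric.tendsto_atTop.mp (O7 hψ hT hu hw) _ hεipos
    have htn : dist w (T^[2 * N1] (T u)) < dlim T u + εi := by
      have := hN1 N1 le_rfl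
      rw [Real.dist_eq, abs_lt] at this
      linarith [this.2]
    obtain ⟨N2, hN2⟩ := Metric.tendsto_atTop.mp (O3 hψ hT hu) _ hεipos
    have hpc : Tendsto (fun t => dist (T^[2 * t] u) (T^[2 * t] (T u)) -
        infDist (T^[2 * t] (T u)) G) atTop (nhds 0) := by
      simpa using (O1 hψ hT hu).sub (O3 hψ hT hu)
    obtain ⟨N3, hN3⟩ := Metric.tendsto_atTop.mp hpc _ hεipos
    refine ⟨max (max N2 N3) i + N1, max (max N2 N3) i, ?_, le_max_right _ _, ?_, ?_⟩
    · exact le_trans (le_max_right _ _) (Nat.le_add_right _ _)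
    · -- diff1
      have hBanti := (Banti hψ hT hwG (memH hT (hT.1 hu) N1))
        (Nat.zero_le (max (max N2 N3) i))
      simp only [Nat.mul_zero, Function.iterate_zero_apply] at hBanti
      rw [itadd T (T u) (max (max N2 N3) i) N1] at hBanti
      -- hBanti : dist (T^[2k] w) (T^[2(k+N1)] (Tu)) ≤ dist w (T^[2 N1] (Tu))
      have hc := hN2 (max (max N2 N3) i + N1)
        (le_trans (le_trans (le_max_left _ _) (le_max_left _ _)) (Nat.le_add_right _ _))
      rw [Real.dist_eq, abs_lt] at hc
      have h2 : dlim T u - εi < infDist (T^[2 * (max (max N2 N3) i + N1)] (T u)) G := by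
        linarith [hc.1]
      linarith
    · -- diff2
      have hc := hN3 (max (max N2 N3) i + N1)
        (le_trans (le_trans (le_max_right _ _) (le_max_left _ _)) (Nat.le_add_right _ _))
      rw [Real.dist_eq, abs_lt] at hc
      linarith [hc.2]
  choose a k ha hk h1 h2 using key
  have hbound2 : Tendsto (fun i : ℕ => 2 * ((i : ℝ) + 1)⁻¹) atTop (nhds 0) := by
    simpa [one_div] using tendsto_one_div_add_atTop_nhds_zero_nat.const_mul (2:ℝ)
  have hbound1 : Tendsto (fun i : ℕ => ((i : ℝ) + 1)⁻¹) atTop (nhds 0) := by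
    simpa [one_div] using tendsto_one_div_add_atTop_nhds_zero_nat (𝕜 := ℝ)
  have htz := hSUC (fun i => T^[2 * k i] w) (fun i => T^[2 * a i] u)
    (fun i => T^[2 * a i] (T u))
    (fun i => memG hT hwG (k i)) (fun i => memG hT hu (a i))
    (fun i => memH hT (hT.1 hu) (a i))
    (squeeze_zero (fun i => by
        have : infDist (T^[2 * a i] (T u)) G ≤ dist (T^[2 * k i] w) (T^[2 * a i] (T u)) := by
          rw [dist_comm]; exact infDist_le_dist_of_mem (memG hT hwG (k i))
        linarith)
      (fun i => h1 i) hbound2)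
    (squeeze_zero (fun i => by
        have : infDist (T^[2 * a i] (T u)) G ≤ dist (T^[2 * a i] u) (T^[2 * a i] (T u)) := by
          rw [dist_comm]; exact infDist_le_dist_of_mem (memG hT hu (a i))
        linarith)
      (fun i => h2 i) hbound1)
  -- y (a i) → w since a i → ∞
  have hatop : Tendsto a atTop atTop := tendsto_atTop_mono ha tendsto_id
  have hya : Tendsto (fun i => T^[2 * a i] u) atTop (nhds w) := hw.comp hatop
  have h3 : Tendsto (fun i => T^[2 * k i] w) atTop (nhds w) := by
    rw [tendsto_iff_dist_tendsto_zero]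
    apply squeeze_zero (fun i => dist_nonneg)
      (g := fun i => dist (T^[2 * k i] w) (T^[2 * a i] u) + dist (T^[2 * a i] u) w)
      (fun i => dist_triangle _ _ _)
    have h4 : Tendsto (fun i => dist (T^[2 * a i] u) w) atTop (nhds 0) :=
      tendsto_iff_dist_tendsto_zero.mp hya
    simpa using htz.add h4
  obtain ⟨w₂, hw₂G, hw₂⟩ := O6 hG hGcomp hSUC hψ hT hwG
  have hktop : Tendsto k atTop atTop := tendsto_atTop_mono hk tendsto_id
  have h4 : Tendsto (fun i => T^[2 * k i] w) atTop (nhds w₂) := hw₂.comp hktop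
  have : w₂ = w := tendsto_nhds_unique h4 h3
  rwa [this] at hw₂

lemma O9 (hG : G.Nonempty) (hGcomp : IsComplete G) (hSUC : PropSUC G H) (hψ : PsiMap ψ)
    (hT : AlmostCyclicPsiContraction G H T ψ) {u w : E} (hu : u ∈ G) (hwG : w ∈ G)
    (hw : Tendsto (fun n => T^[2 * n] u) atTop (nhds w)) :
    dist w (T w) = infDist (T w) G := by
  have hself : Tendsto (fun k => T^[2 * k] w) atTop (nhds w) :=
    O8 hG hGcomp hSUC hψ hT hu hwG hw
  have ht' : Tendsto (fun j => dist w (T^[2 * j] (T w))) atTop (nhds (dlim T w)) :=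
    O7 hψ hT hwG hself
  -- upper: dist w (T w) ≤ dlim T w
  have hf : ∀ j, dist (T^[2 * (j + 1)] w) (T w) ≤ dist w (T^[2 * j] (T w)) := by
    intro j
    have h := nonexp hψ hT hwG (memH hT (hT.1 hwG) j)
    -- h : dist (T w) (T (T^[2j] (T w))) ≤ dist w (T^[2j] (T w))
    rw [itc T (T w) (2 * j)] at h
    -- T^[2j] (T (T w)) = T^[2(j+1)] w
    rw [← it2' T w j] at h
    rw [dist_comm]
    exact h
  have hfa : Tendsto (fun j => dist (T^[2 * (j + 1)] w) (T w)) atTop (nhds (dist w (T w))) := by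
    have h1 : Tendsto (fun j => T^[2 * (j + 1)] w) atTop (nhds w) := by
      have := hself.comp (tendsto_add_atTop_nat 1)
      simpa [Function.comp_def] using this
    exact h1.dist tendsto_const_nhds
  have h5a : dist w (T w) ≤ dlim T w := le_of_tendsto_of_tendsto' hfa ht' hf
  -- lower: dlim T w ≤ infDist (T w) G
  have h5b : dlim T w ≤ infDist (T w) G := by
    apply le_infDist' hG
    intro v hv
    -- B-instance (a := v, b := T w)
    have hanti := Banti hψ hT hv (hT.1 hwG)
    have hγb : ∀ k, infDist (T^[2 * k] (T w)) G ≤ dist v (T w) := by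
      intro k
      have h1 := Bgle hT hv (b := T w) k
      have h2 := hanti (Nat.zero_le k)
      simp only [Nat.mul_zero, Function.iterate_zero_apply] at h2
      linarith
    have := le_of_tendsto' (O3 hψ hT hwG) hγb
    rwa [dist_comm] at this
  have h5c : infDist (T w) G ≤ dist w (T w) := by
    rw [dist_comm]
    exact infDist_le_dist_of_mem hwG
  linarith

lemma uniq (hG : G.Nonempty) (hSUC : PropSUC G H) (hψ : PsiMap ψ)
    (hT : AlmostCyclicPsiContraction G H T ψ) {z z' : E} (hz : z ∈ G) (hz' : z' ∈ G)
    (hb : dist z (T z) = infDist (T z) G) (hb' : dist z' (T z') = infDist (T z') G) :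
    z = z' := by
  -- 2-periodicity of a best approximation point
  have per : ∀ v : E, v ∈ G → dist v (T v) = infDist (T v) G → T (T v) = v := by
    intro v hv hbv
    have h1 := hT.2.2 v hv (T v) (hT.1 hv)
    have h2 : infDist (T v) G ≤ dist (T v) (T (T v)) :=
      infDist_le_dist_of_mem (hT.2.1 (hT.1 hv))
    have h3 : dist (T v) (T (T v)) = infDist (T v) G := by
      rw [← hbv] at h1 ⊢
      linarith
    have htz := hSUC (fun _ => v) (fun _ => T (T v)) (fun _ => T v)
      (fun _ => hv) (fun _ => hT.2.1 (hT.1 hv)) (fun _ => hT.1 hv)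
      (by simpa [hbv] using (tendsto_const_nhds : Tendsto (fun _ : ℕ => (0:ℝ)) atTop (nhds 0)))
      (by simpa [dist_comm (T (T v)) (T v), h3]
        using (tendsto_const_nhds : Tendsto (fun _ : ℕ => (0:ℝ)) atTop (nhds 0)))
    have h4 : dist v (T (T v)) = 0 :=
      tendsto_nhds_unique (tendsto_const_nhds (α := ℕ) (f := atTop)) htz
    exact (dist_eq_zero.mp h4).symm
  have hp := per z hz hb
  have hp' := per z' hz' hb'
  have hiter : ∀ (v : E), T (T v) = v → ∀ k, T^[2 * k] v = v := by
    intro v hv k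
    induction k with
    | zero => simp
    | succ k ih =>
      rw [show 2 * (k + 1) = 2 * k + 2 by ring, Function.iterate_add_apply]
      have : T^[2] v = v := by
        simp only [Function.iterate_succ_apply, Function.iterate_zero_apply,
          Function.iterate_one]
        exact hv
      rw [this, ih]
  -- z' is an exact minimizer for T z
  have hrec := Brec hψ hT hz' (hT.1 hz) 0
  have he1 : ∀ k, T^[2 * k] z' = z' := hiter z' hp'
  have he2 : ∀ k, T^[2 * k] (T z) = T z := by
    intro k
    rw [← itc T z (2 * k), hiter z hp k]
  rw [he1 0, he1 1, he2 0, he2 1] at hrec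
  -- hrec : dist z' (T z) ≤ dist z' (T z) - ψ (dist z' (T z)) + ψ (infDist (T z) G)
  have hψle : ψ (dist z' (T z)) ≤ ψ (infDist (T z) G) := by linarith
  have hge : infDist (T z) G ≤ dist z' (T z) := by
    rw [dist_comm]
    exact infDist_le_dist_of_mem hz'
  have heq : dist z' (T z) = infDist (T z) G := by
    by_contra hne
    have hlt : infDist (T z) G < dist z' (T z) := lt_of_le_of_ne hge (Ne.symm hne)
    have := psi_lt_of_le hψ infDist_nonneg hlt
    linarith
  -- SUC with constant sequences
  have htz := hSUC (fun _ => z) (fun _ => z') (fun _ => T z)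
    (fun _ => hz) (fun _ => hz') (fun _ => hT.1 hz)
    (by simpa [hb] using (tendsto_const_nhds : Tendsto (fun _ : ℕ => (0:ℝ)) atTop (nhds 0)))
    (by simpa [heq] using (tendsto_const_nhds : Tendsto (fun _ : ℕ => (0:ℝ)) atTop (nhds 0)))
  have h4 : dist z z' = 0 :=
    tendsto_nhds_unique (tendsto_const_nhds (α := ℕ) (f := atTop)) htz
  exact dist_eq_zero.mp h4

end Final

section Master

variable {E : Type*} [MetricSpace E] {G H : Set E} {ψ : ℝ → ℝ} {T : E → E}

lemma master (hG : G.Nonempty) (hGcomp : IsComplete G) (hSUC : PropSUC G H) (hψ : PsiMap ψ)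
    (hT : AlmostCyclicPsiContraction G H T ψ) {u : E} (hu : u ∈ G) :
    ∃ w ∈ G, Tendsto (fun n => T^[2 * n] u) atTop (nhds w) ∧
      dist w (T w) = infDist (T w) G := by
  obtain ⟨w, hwG, hw⟩ := O6 hG hGcomp hSUC hψ hT hu
  exact ⟨w, hwG, hw, O9 hG hGcomp hSUC hψ hT hu hwG hw⟩

end Master


/-- If `G` is complete, `(G,H)` has property strongly UC, and `T` is an almost cyclic
ψ-contraction on `G ∪ H`, then `T` has a unique best approximation `u₀` in `G`, and
for every `u ∈ G` the sequence `{T^{2n} u}` converges to `u₀`. -/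
theorem bestApprox_exists_unique {E : Type*} [MetricSpace E]
    (G H : Set E) (hG : G.Nonempty) (hH : H.Nonempty)
    (hGcomp : IsComplete G) (hSUC : PropSUC G H)
    (ψ : ℝ → ℝ) (hψ : PsiMap ψ) (T : E → E)
    (hT : AlmostCyclicPsiContraction G H T ψ) :
    ∃ u₀ ∈ G, dist u₀ (T u₀) = Metric.infDist (T u₀) G ∧
      (∀ z ∈ G, dist z (T z) = Metric.infDist (T z) G → z = u₀) ∧
      ∀ u ∈ G, Tendsto (fun n => T^[2 * n] u) atTop (nhds u₀) := by
  obtain ⟨u₀, hu₀G, hconv₀, hba₀⟩ := master hG hGcomp hSUC hψ hT hG.some_mem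
  refine ⟨u₀, hu₀G, hba₀, ?_, ?_⟩
  · intro z hzG hzba
    exact uniq hG hSUC hψ hT hzG hu₀G hzba hba₀
  · intro u hu
    obtain ⟨w, hwG, hconv, hba⟩ := master hG hGcomp hSUC hψ hT hu
    have : w = u₀ := uniq hG hSUC hψ hT hwG hu₀G hba hba₀
    rwa [this] at hconv
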